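/- If the conclusion of any rule of the one-sided labelled calculus LS1K extended with the 3-1-transitivity rule is a labelled rooted directed acyclic graph, then each premise of that rule instance is also a labelled rooted directed acyclic graph. -/

import Mathlib

/-- One-sided modal formulas in negation normal form. -/
inductive MFml : Type where
  | pos : ℕ → MFml
  | neg : ℕ → MFml
  | and : MFml → MFml → MFml
  | or : MFml → MFml → MFml
  | box : MFml → MFml
  | dia : MFml → MFml
deriving DecidableEq

/-- A one-sided labelled sequent: a relation set `R` and a multiset `Γ` of
labelled formulae. -/
abbrev LSeq (V : Type) [DecidableEq V] := Finset (V × V) × Multiset (V × MFml)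

/-- A state variable occurs in a one-sided labelled sequent. -/
def occursIn {V : Type} [DecidableEq V] (S : LSeq V) (v : V) : Prop :=
  (∃ w, (v, w) ∈ S.1 ∨ (w, v) ∈ S.1) ∨ (∃ A, (v, A) ∈ S.2)

/-- The sequent, viewed as a directed graph on its state variables, is a labelled
rooted directed acyclic graph: some occurring variable reaches every occurring
variable, and there are no directed cycles. -/
def IsLrDAG {V : Type} [DecidableEq V] (S : LSeq V) : Prop :=
  (∃ r, occursIn S r ∧
    ∀ v, occursIn S v → Relation.ReflTransGen (fun a b => (a, b) ∈ S.1) r v) ∧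
  (∀ v, ¬ Relation.TransGen (fun a b => (a, b) ∈ S.1) v v)

/-- `Step prems concl`: the list `prems` of premises and the sequent `concl` form an
instance of a rule of the one-sided labelled calculus LS1K extended with the
3-1-transitivity rule. -/
inductive Step {V : Type} [DecidableEq V] : List (LSeq V) → LSeq V → Prop where
  | init (R : Finset (V × V)) (Γ : Multiset (V × MFml)) (x : V) (p : ℕ) :
      Step [] (R, (x, MFml.pos p) ::ₘ (x, MFml.neg p) ::ₘ Γ)
  | box (R : Finset (V × V)) (Γ : Multiset (V × MFml)) (x y : V) (A : MFml)
      (hy : ¬ occursIn (R, (x, MFml.box A) ::ₘ Γ) y) :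
      Step [(insert (x, y) R, (y, A) ::ₘ Γ)] (R, (x, MFml.box A) ::ₘ Γ)
  | dia (R : Finset (V × V)) (Γ : Multiset (V × MFml)) (x y : V) (A : MFml)
      (h : (x, y) ∈ R) :
      Step [(R, (x, MFml.dia A) ::ₘ (y, A) ::ₘ Γ)] (R, (x, MFml.dia A) ::ₘ Γ)
  | and (R : Finset (V × V)) (Γ : Multiset (V × MFml)) (x : V) (A B : MFml) :
      Step [(R, (x, A) ::ₘ Γ), (R, (x, B) ::ₘ Γ)] (R, (x, MFml.and A B) ::ₘ Γ)
  | or (R : Finset (V × V)) (Γ : Multiset (V × MFml)) (x : V) (A B : MFml) :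
      Step [(R, (x, A) ::ₘ (x, B) ::ₘ Γ)] (R, (x, MFml.or A B) ::ₘ Γ)
  | t31 (R : Finset (V × V)) (Γ : Multiset (V × MFml)) (x y z w : V)
      (h₁ : (x, y) ∈ R) (h₂ : (y, z) ∈ R) (h₃ : (z, w) ∈ R) :
      Step [(insert (x, w) R, Γ)] (R, Γ)

private lemma tg_of {α : Type*} {r s : α → α → Prop}
    (h : ∀ a b, r a b → Relation.TransGen s a b)
    {a b : α} (ht : Relation.TransGen r a b) : Relation.TransGen s a b := by
  induction ht with
  | single h' => exact h _ _ h'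
  | tail _ h' ih => exact ih.trans (h _ _ h')

private lemma tg_first {α : Type*} {r : α → α → Prop} {a b : α}
    (ht : Relation.TransGen r a b) : ∃ c, r a c := by
  induction ht with
  | single h' => exact ⟨_, h'⟩
  | tail _ _ ih => exact ih

/-- If two sequents have the same relation set and the same occurring variables,
lrDAG-ness transfers. -/
private lemma lrDAG_of_occ_iff {V : Type} [DecidableEq V] {R : Finset (V × V)}
    {Γ Δ : Multiset (V × MFml)}
    (h : ∀ v, occursIn (R, Γ) v ↔ occursIn (R, Δ) v)
    (hd : IsLrDAG (R, Δ)) : IsLrDAG (R, Γ) := by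
  obtain ⟨⟨r, hr, hreach⟩, hacyc⟩ := hd
  exact ⟨⟨r, (h r).mpr hr, fun v hv => hreach v ((h v).mp hv)⟩, hacyc⟩

/-- If the conclusion of any rule of LS1K + 3-1-transitivity is a labelled rooted
directed acyclic graph, then each premise of that rule instance is as well. -/
theorem step_preserves_lrDAG {V : Type} [DecidableEq V]
    (prems : List (LSeq V)) (concl : LSeq V)
    (h : Step prems concl) (hc : IsLrDAG concl) :
    ∀ s ∈ prems, IsLrDAG s := by
  intro s hs
  cases h with
  | init R Γ x p => simp at hs
  | box R Γ x y A hy =>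
      simp only [List.mem_singleton] at hs
      subst hs
      obtain ⟨⟨r, hr, hreach⟩, hacyc⟩ := hc
      -- facts about freshness of y
      simp only [occursIn, not_or, not_exists] at hy
      obtain ⟨hy1, hy2⟩ := hy
      have hx : occursIn (R, (x, MFml.box A) ::ₘ Γ) x :=
        Or.inr ⟨_, Multiset.mem_cons_self _ _⟩
      have hyx : y ≠ x := by
        rintro rfl
        exact hy2 _ (Multiset.mem_cons_self _ _)
      -- occurrence transfer from conclusion to premise
      have occ_ct : ∀ v, occursIn (R, (x, MFml.box A) ::ₘ Γ) v →
          occursIn (insert (x, y) R, (y, A) ::ₘ Γ) v := by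
        rintro v (⟨w, hw | hw⟩ | ⟨B, hB⟩)
        · exact Or.inl ⟨w, Or.inl (Finset.mem_insert_of_mem hw)⟩
        · exact Or.inl ⟨w, Or.inr (Finset.mem_insert_of_mem hw)⟩
        · rcases Multiset.mem_cons.mp hB with h' | h'
          · have : v = x := congrArg Prod.fst h'
            subst this
            exact Or.inl ⟨y, Or.inl (Finset.mem_insert_self _ _)⟩
          · exact Or.inr ⟨B, Multiset.mem_cons_of_mem h'⟩
      refine ⟨⟨r, occ_ct r hr, ?_⟩, ?_⟩
      · intro v hv
        have hvy : v = y ∨ occursIn (R, (x, MFml.box A) ::ₘ Γ) v := by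
          rcases hv with ⟨w, hw | hw⟩ | ⟨B, hB⟩
          · rcases Finset.mem_insert.mp hw with h' | h'
            · have hvx : v = x := congrArg Prod.fst h'
              subst hvx
              exact Or.inr hx
            · exact Or.inr (Or.inl ⟨w, Or.inl h'⟩)
          · rcases Finset.mem_insert.mp hw with h' | h'
            · exact Or.inl (congrArg Prod.snd h')
            · exact Or.inr (Or.inl ⟨w, Or.inr h'⟩)
          · rcases Multiset.mem_cons.mp hB with h' | h'
            · exact Or.inl (congrArg Prod.fst h')
            · exact Or.inr (Or.inr ⟨B, Multiset.mem_cons_of_mem h'⟩)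
        have mono : ∀ u, occursIn (R, (x, MFml.box A) ::ₘ Γ) u →
            Relation.ReflTransGen (fun a b => (a, b) ∈ insert (x, y) R) r u := by
          intro u hu
          exact Relation.ReflTransGen.mono (fun a b hab => Finset.mem_insert_of_mem hab) _ _ (hreach u hu)
        rcases hvy with rfl | hv'
        · exact (mono x hx).tail (Finset.mem_insert_self _ _)
        · exact mono v hv'
      · -- acyclicity
        intro v hv
        have no_out : ∀ c b, (c, b) ∈ insert (x, y) R → c ≠ y := by
          intro c b hcb hc
          subst hc
          rcases Finset.mem_insert.mp hcb with h' | h'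
          · exact hyx (Prod.ext_iff.mp h').1
          · exact (hy1 b).1 h'
        have red : ∀ a b, Relation.TransGen
            (fun a b => (a, b) ∈ insert (x, y) R) a b → b ≠ y →
            Relation.TransGen (fun a b => (a, b) ∈ R) a b := by
          intro a b ht
          induction ht with
          | single h' =>
              intro hb
              rcases Finset.mem_insert.mp h' with h'' | h''
              · exact absurd (congrArg Prod.snd h'') hb
              · exact Relation.TransGen.single h''
          | tail h1 h2 ih =>
              intro hb
              have hc := no_out _ _ h2
              rcases Finset.mem_insert.mp h2 with h'' | h''
              · exact absurd (congrArg Prod.snd h'') hb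
              · exact (ih hc).tail h''
        have hvy : v ≠ y := by
          obtain ⟨c, hc⟩ := tg_first hv
          exact no_out _ _ hc
        exact hacyc v (red v v hv hvy)
  | dia R Γ x y A hmem =>
      simp only [List.mem_singleton] at hs
      subst hs
      refine lrDAG_of_occ_iff (fun v => ?_) hc
      simp only [occursIn, Multiset.mem_cons]
      constructor
      · rintro (h' | ⟨B, hB | hB | hB⟩)
        · exact Or.inl h'
        · exact Or.inr ⟨B, Or.inl hB⟩
        · have : v = y := congrArg Prod.fst hB
          exact Or.inl ⟨x, Or.inr (this ▸ hmem)⟩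
        · exact Or.inr ⟨B, Or.inr hB⟩
      · rintro (h' | ⟨B, hB | hB⟩)
        · exact Or.inl h'
        · exact Or.inr ⟨B, Or.inl hB⟩
        · exact Or.inr ⟨B, Or.inr (Or.inr hB)⟩
  | and R Γ x A B =>
      have key : ∀ C, IsLrDAG ((R, (x, C) ::ₘ Γ) : LSeq V) := by
        intro C
        refine lrDAG_of_occ_iff (fun v => ?_) hc
        simp only [occursIn, Multiset.mem_cons]
        constructor
        · rintro (h' | ⟨D, hD | hD⟩)
          · exact Or.inl h'
          · have : v = x := congrArg Prod.fst hD
            exact Or.inr ⟨_, Or.inl (by rw [this])⟩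
          · exact Or.inr ⟨D, Or.inr hD⟩
        · rintro (h' | ⟨D, hD | hD⟩)
          · exact Or.inl h'
          · have : v = x := congrArg Prod.fst hD
            exact Or.inr ⟨C, Or.inl (by rw [this])⟩
          · exact Or.inr ⟨D, Or.inr hD⟩
      simp only [List.mem_cons, List.mem_singleton, List.not_mem_nil, or_false] at hs
      rcases hs with hs | hs
      · rw [hs]; exact key A
      · rw [hs]; exact key B
  | or R Γ x A B =>
      simp only [List.mem_singleton] at hs
      subst hs
      refine lrDAG_of_occ_iff (fun v => ?_) hc
      simp only [occursIn, Multiset.mem_cons]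
      constructor
      · rintro (h' | ⟨D, hD | hD | hD⟩)
        · exact Or.inl h'
        · have : v = x := congrArg Prod.fst hD
          exact Or.inr ⟨_, Or.inl (by rw [this])⟩
        · have : v = x := congrArg Prod.fst hD
          exact Or.inr ⟨_, Or.inl (by rw [this])⟩
        · exact Or.inr ⟨D, Or.inr hD⟩
      · rintro (h' | ⟨D, hD | hD⟩)
        · exact Or.inl h'
        · have : v = x := congrArg Prod.fst hD
          exact Or.inr ⟨A, Or.inl (by rw [this])⟩
        · exact Or.inr ⟨D, Or.inr (Or.inr hD)⟩
  | t31 R Γ x y z w h₁ h₂ h₃ =>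
      simp only [List.mem_singleton] at hs
      subst hs
      obtain ⟨⟨r, hr, hreach⟩, hacyc⟩ := hc
      have occ_ct : ∀ v, occursIn (R, Γ) v → occursIn (insert (x, w) R, Γ) v := by
        rintro v (⟨u, hu | hu⟩ | hF)
        · exact Or.inl ⟨u, Or.inl (Finset.mem_insert_of_mem hu)⟩
        · exact Or.inl ⟨u, Or.inr (Finset.mem_insert_of_mem hu)⟩
        · exact Or.inr hF
      have occ_pc : ∀ v, occursIn (insert (x, w) R, Γ) v → occursIn (R, Γ) v := by
        rintro v (⟨u, hu | hu⟩ | hF)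
        · rcases Finset.mem_insert.mp hu with h' | h'
          · have : v = x := congrArg Prod.fst h'
            exact Or.inl ⟨y, Or.inl (this ▸ h₁)⟩
          · exact Or.inl ⟨u, Or.inl h'⟩
        · rcases Finset.mem_insert.mp hu with h' | h'
          · have : v = w := congrArg Prod.snd h'
            exact Or.inl ⟨z, Or.inr (this ▸ h₃)⟩
          · exact Or.inl ⟨u, Or.inr h'⟩
        · exact Or.inr hF
      refine ⟨⟨r, occ_ct r hr, ?_⟩, ?_⟩
      · intro v hv
        exact Relation.ReflTransGen.mono
          (fun a b hab => Finset.mem_insert_of_mem hab) _ _ (hreach v (occ_pc v hv))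
      · intro v hv
        refine hacyc v (tg_of (fun a b hab => ?_) hv)
        rcases Finset.mem_insert.mp hab with h' | h'
        · have hax : a = x := congrArg Prod.fst h'
          have hbw : b = w := congrArg Prod.snd h'
          subst hax hbw
          exact ((Relation.TransGen.single h₁).tail h₂).tail h₃
        · exact Relation.TransGen.single h'
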